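/- Normal form lemma: every L-formula φ is provably equivalent in AX (hence in each extension AX_det, AX↓, AX↓_det) to a disjunction of conjunctive clauses, where each clause has the form π ∧ ⋀_{i∈I}([α_i] ⋁_{j∈J_i} β_{i,j}) ∧ ⋀_{k∈K} ⟨α_k⟩ β_k with π ∈ L_prop, all α's in L_int, all β_{i,j} and β_k in L_int, and with the α_i for distinct i ∈ I pairwise distinct. -/

import Mathlib

set_option maxHeartbeats 1000000

namespace CausalSim

/-! ### Propositional syntax -/

/-- Propositional formulas over atoms `X_i`. -/
inductive PropForm : Type
  | atom : ℕ → PropForm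
  | neg : PropForm → PropForm
  | and : PropForm → PropForm → PropForm
  | or : PropForm → PropForm → PropForm
  deriving DecidableEq

def PropForm.imp (φ ψ : PropForm) : PropForm := .or (.neg φ) ψ

/-- A fixed propositional contradiction. -/
def PropForm.bot : PropForm := .and (.atom 0) (.neg (.atom 0))

/-- Its negation, a fixed tautology. -/
def PropForm.top : PropForm := PropForm.neg PropForm.bot

def PropForm.eval (v : ℕ → Bool) : PropForm → Bool
  | .atom i => v i
  | .neg φ => !(φ.eval v)
  | .and φ ψ => φ.eval v && ψ.eval v
  | .or φ ψ => φ.eval v || ψ.eval v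

/-- `L_int`: ordered conjunctions of literals over distinct atoms, represented by
the list of literals `(index, polarity)`, with strictly increasing indices.
The empty list represents the empty intervention `⊤`. -/
abbrev Lint : Type := {l : List (ℕ × Bool) // l.Chain' fun p q => p.1 < q.1}

instance : DecidableEq Lint := fun a b =>
  decidable_of_iff (a.1 = b.1) Subtype.ext_iff.symm

def Lint.top : Lint := ⟨[], List.isChain_nil⟩

/-- The partial assignment (intervention) specified by `α ∈ L_int`. -/
def Lint.itv (α : Lint) : ℕ → Option Bool :=
  fun i => (α.1.find? fun p => p.1 == i).map Prod.snd

def PropForm.lit (p : ℕ × Bool) : PropForm :=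
  if p.2 then .atom p.1 else .neg (.atom p.1)

/-- `α ∈ L_int` regarded as a propositional formula (conjunction of its literals;
`⊤` for the empty intervention). -/
def Lint.toProp (α : Lint) : PropForm :=
  match α.1 with
  | [] => PropForm.top
  | p :: rest => rest.foldl (fun acc q => .and acc (.lit q)) (.lit p)

/-! ### The language `L` -/

/-- The causal simulation language `L`: propositional formulas over the atoms
`X ∪ L_cond`, where a conditional `[α]β` has antecedent `α ∈ L_int` and
consequent `β ∈ L_prop`. -/
inductive LForm : Type
  | atom : ℕ → LForm
  | cond : Lint → PropForm → LForm
  | neg : LForm → LForm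
  | and : LForm → LForm → LForm
  | or : LForm → LForm → LForm

def LForm.imp (φ ψ : LForm) : LForm := .or (.neg φ) ψ

def LForm.iff (φ ψ : LForm) : LForm := .and (φ.imp ψ) (ψ.imp φ)

/-- `⟨α⟩β`, an abbreviation for `¬[α]¬β`. -/
def LForm.dia (α : Lint) (β : PropForm) : LForm := .neg (.cond α (.neg β))

/-- The embedding of `L_prop` into `L`. -/
def PropForm.toL : PropForm → LForm
  | .atom i => .atom i
  | .neg φ => .neg φ.toL
  | .and φ ψ => .and φ.toL ψ.toL
  | .or φ ψ => .or φ.toL ψ.toL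

/-- Evaluation of an `L`-formula treating the elements of `X ∪ L_cond` as
propositional atoms: `v` assigns values to the `X`-atoms and `w` to the
conditional atoms. -/
def LForm.evalA (v : ℕ → Bool) (w : Lint → PropForm → Bool) : LForm → Bool
  | .atom i => v i
  | .cond α β => w α β
  | .neg φ => !(φ.evalA v w)
  | .and φ ψ => φ.evalA v w && ψ.evalA v w
  | .or φ ψ => φ.evalA v w || ψ.evalA v w

/-- Substitution instances of propositional tautologies over the atoms `X ∪ L_cond`. -/
def Tautology (φ : LForm) : Prop := ∀ v w, φ.evalA v w = true

/-! ### Turing machines over a Boolean variable tape, and interventions -/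

/-- A transition rule `((q, read), (q', write, moveRight))`. -/
abbrev Rule : Type := (ℕ × Bool) × (ℕ × Bool × Bool)

/-- A (possibly non-deterministic) Turing machine, given by its finite list of
transition rules; the initial control state is `0`, and the machine halts in a
configuration to which no rule applies. -/
abbrev Machine : Type := List Rule

/-- A configuration: control state, head position, and tape contents. -/
structure Cfg where
  q : ℕ
  pos : ℕ
  tape : ℕ → Bool

/-- The initial tape: the intervention `itv` first sets the intervened variables. -/
def initTape (itv : ℕ → Option Bool) (x : ℕ → Bool) : ℕ → Bool :=
  fun i => (itv i).getD (x i)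

/-- Writing under an intervention: writes to intervened variables are ignored. -/
def writeTape (itv : ℕ → Option Bool) (t : ℕ → Bool) (pos : ℕ) (b : Bool) : ℕ → Bool :=
  if itv pos = none then Function.update t pos b else t

def movePos (p : ℕ) (right : Bool) : ℕ := if right then p + 1 else p - 1

/-- One step of the intervened machine `I_itv(T)`. -/
def MStep (T : Machine) (itv : ℕ → Option Bool) (c c' : Cfg) : Prop :=
  ∃ r ∈ T, r.1 = (c.q, c.tape c.pos) ∧
    c' = ⟨r.2.1, movePos c.pos r.2.2.2, writeTape itv c.tape c.pos r.2.2.1⟩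

/-- A halted configuration: no rule applies. -/
def Halted (T : Machine) (c : Cfg) : Prop := ∀ r ∈ T, r.1 ≠ (c.q, c.tape c.pos)

/-- The set of result tapes of halting executions of `I_itv(T)` on input `x`. -/
def Outputs (T : Machine) (itv : ℕ → Option Bool) (x : ℕ → Bool) : Set (ℕ → Bool) :=
  {y | ∃ c : Cfg, Relation.ReflTransGen (MStep T itv) ⟨0, 0, initTape itv x⟩ c ∧
        Halted T c ∧ c.tape = y}

/-- Deterministic machines: at most one rule per (state, read symbol). -/
def Machine.Det (T : Machine) : Prop := ∀ r₁ ∈ T, ∀ r₂ ∈ T, r₁.1 = r₂.1 → r₁ = r₂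

/-- State descriptions have finite support. -/
def FinSupp (x : ℕ → Bool) : Prop := {i | x i = true}.Finite

/-- Machines with at least one halting execution on every input tape under
every intervention. -/
def Machine.TotalHalting (T : Machine) : Prop :=
  ∀ (α : Lint) (x : ℕ → Bool), FinSupp x → (Outputs T α.itv x).Nonempty

/-- Finite state machines: over all inputs and interventions, the machine reads and
writes only boundedly many tape variables. -/
def Machine.FiniteState (T : Machine) : Prop :=
  ∃ B : ℕ, ∀ (α : Lint) (x : ℕ → Bool), FinSupp x →
    ∀ c : Cfg, Relation.ReflTransGen (MStep T α.itv) ⟨0, 0, initTape α.itv x⟩ c → c.pos < B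

/-! ### Causal simulation models and satisfaction -/

/-- A causal simulation model: a machine together with a state description with
finite support. -/
structure CSM where
  T : Machine
  x : ℕ → Bool
  fin : FinSupp x

/-- Satisfaction, generically in the map sending each intervention `α ∈ L_int`
to the set of output tapes of the corresponding halting executions. -/
def SatGen (O : Lint → Set (ℕ → Bool)) (x : ℕ → Bool) : LForm → Prop
  | .atom i => x i = true
  | .cond α β => ∀ y ∈ O α, β.eval y = true
  | .neg φ => ¬ SatGen O x φ
  | .and φ ψ => SatGen O x φ ∧ SatGen O x ψ
  | .or φ ψ => SatGen O x φ ∨ SatGen O x ψ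

/-- `(T, x) ⊨ φ`. -/
def CSM.Sat (M : CSM) (φ : LForm) : Prop :=
  SatGen (fun α => Outputs M.T α.itv M.x) M.x φ

/-- The class `M` of all causal simulation models. -/
def inM (_ : CSM) : Prop := True

/-- The class `M_det`. -/
def inMdet (M : CSM) : Prop := M.T.Det

/-- The class `M↓`. -/
def inMhalt (M : CSM) : Prop := M.T.TotalHalting

/-- The class `M↓_det`. -/
def inMdethalt (M : CSM) : Prop := M.T.Det ∧ M.T.TotalHalting

/-! ### The axiomatic systems -/

/-- Derivability from: propositional tautologies (over atoms `X ∪ L_cond`),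
the axioms `R` and `K`, extra axioms `extra`, modus ponens, and the rule `RW`. -/
inductive Deriv (extra : LForm → Prop) : LForm → Prop
  | taut {φ} : Tautology φ → Deriv extra φ
  | extra {φ} : extra φ → Deriv extra φ
  | axR (α : Lint) : Deriv extra (.cond α α.toProp)
  | axK (α : Lint) (β γ : PropForm) :
      Deriv extra ((LForm.cond α (β.imp γ)).imp ((LForm.cond α β).imp (.cond α γ)))
  | mp {φ ψ} : Deriv extra (φ.imp ψ) → Deriv extra φ → Deriv extra ψ
  | rw (α : Lint) {β β' : PropForm} :
      Deriv extra (β.imp β').toL → Deriv extra ((LForm.cond α β).imp (.cond α β'))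

/-- Instances of axiom `F : ⟨α⟩β → [α]β`. -/
def axF (φ : LForm) : Prop :=
  ∃ (α : Lint) (β : PropForm), φ = (LForm.dia α β).imp (.cond α β)

/-- Instances of axiom `D : [α]β → ⟨α⟩β`. -/
def axD (φ : LForm) : Prop :=
  ∃ (α : Lint) (β : PropForm), φ = (LForm.cond α β).imp (LForm.dia α β)

def AX : LForm → Prop := Deriv fun _ => False
def AXdet : LForm → Prop := Deriv axF
def AXhalt : LForm → Prop := Deriv axD
def AXdethalt : LForm → Prop := Deriv fun φ => axF φ ∨ axD φ

end CausalSim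
namespace CausalSim

/-! ### Normal form clauses and selection functions -/

def bigAndL : List LForm → LForm
  | [] => PropForm.top.toL
  | φ :: rest => rest.foldl .and φ

def bigOrL : List LForm → LForm
  | [] => PropForm.bot.toL
  | φ :: rest => rest.foldl .or φ

def bigOrP : List PropForm → PropForm
  | [] => PropForm.bot
  | φ :: rest => rest.foldl .or φ

/-- The data of a conjunctive clause
`π ∧ ⋀_{i∈I}([α_i] ⋁_{j∈J_i} β_{i,j}) ∧ ⋀_{k∈K} ⟨α_k⟩ β_k`. -/
structure Clause where
  pi : PropForm
  boxes : List (Lint × List Lint)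
  dias : List (Lint × Lint)

/-- The `α_i` (for distinct `i ∈ I`) are pairwise distinct. -/
def Clause.wf (δ : Clause) : Prop := (δ.boxes.map Prod.fst).Pairwise (· ≠ ·)

def Clause.toLForm (δ : Clause) : LForm :=
  .and δ.pi.toL (.and
    (bigAndL (δ.boxes.map fun p => .cond p.1 (bigOrP (p.2.map Lint.toProp))))
    (bigAndL (δ.dias.map fun p => LForm.dia p.1 p.2.toProp)))

/-- `S_δ`: the antecedents occurring in the clause `δ`. -/
def Clause.ants (δ : Clause) : List Lint := δ.boxes.map Prod.fst ++ δ.dias.map Prod.fst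

/-- A list of literals is propositionally consistent. -/
def LitsConsistent (l : List (ℕ × Bool)) : Prop :=
  ∀ i, ¬((i, true) ∈ l ∧ (i, false) ∈ l)

/-- `γ` is the `L_int`-equivalent of the conjunction of the literals `l`
(reordering and deletion of repeated literals). -/
def Lint.IsEquivOf (γ : Lint) (l : List (ℕ × Bool)) : Prop := γ.1.toFinset = l.toFinset

/-- `f` is a selection function for the clause `δ`. -/
def IsSelection (δ : Clause) (f : Lint → List Lint) : Prop :=
  (∀ α ∈ δ.ants, α ∉ δ.dias.map Prod.fst → f α = []) ∧
  (∀ α ∈ δ.dias.map Prod.fst, ∃ sel : Lint × Lint → Lint,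
    f α = (δ.dias.filter fun p => decide (p.1 = α)).map sel ∧
    ∀ p ∈ δ.dias, p.1 = α →
      (∀ J, (α, J) ∈ δ.boxes →
        ∃ j ∈ J, LitsConsistent (α.1 ++ p.2.1 ++ j.1) ∧
          (sel p).IsEquivOf (α.1 ++ p.2.1 ++ j.1)) ∧
      (α ∉ δ.boxes.map Prod.fst →
        LitsConsistent (α.1 ++ p.2.1) ∧ (sel p).IsEquivOf (α.1 ++ p.2.1)))

/-! ### Sizes -/

def PropForm.size : PropForm → ℕ
  | .atom i => i + 1
  | .neg φ => φ.size + 1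
  | .and φ ψ => φ.size + ψ.size + 1
  | .or φ ψ => φ.size + ψ.size + 1

def Lint.size (α : Lint) : ℕ := (α.1.map fun p => p.1 + 1).sum + 1

/-- `|φ|`, the number of symbols of `φ` (an occurrence of the atom `X_i`
contributing `i + 1` symbols). -/
def LForm.size : LForm → ℕ
  | .atom i => i + 1
  | .cond α β => α.size + β.size + 1
  | .neg φ => φ.size + 1
  | .and φ ψ => φ.size + ψ.size + 1
  | .or φ ψ => φ.size + ψ.size + 1

def PropForm.maxAtom : PropForm → ℕ
  | .atom i => i
  | .neg φ => φ.maxAtom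
  | .and φ ψ => max φ.maxAtom ψ.maxAtom
  | .or φ ψ => max φ.maxAtom ψ.maxAtom

def Lint.maxAtom (α : Lint) : ℕ := (α.1.map Prod.fst).foldr max 0

/-- `N`: the largest index of an atom occurring in `φ`. -/
def LForm.maxAtom : LForm → ℕ
  | .atom i => i
  | .cond α β => max α.maxAtom β.maxAtom
  | .neg φ => φ.maxAtom
  | .and φ ψ => max φ.maxAtom ψ.maxAtom
  | .or φ ψ => max φ.maxAtom ψ.maxAtom

/-- `S_φ`: the antecedents of the conditionals occurring in `φ`. -/
def LForm.ants : LForm → List Lint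
  | .atom _ => []
  | .cond α _ => [α]
  | .neg φ => φ.ants
  | .and φ ψ => φ.ants ++ ψ.ants
  | .or φ ψ => φ.ants ++ ψ.ants

/-! ### The programming language `PL` -/

/-- Assignment statements `X_i := c`, `X_i := X_j`, `X_i := !X_j`. -/
inductive BAssign : Type
  | const (i : ℕ) (c : Bool)
  | copy (i j : ℕ)
  | negcopy (i j : ℕ)
  deriving DecidableEq

def BAssign.target : BAssign → ℕ
  | .const i _ => i
  | .copy i _ => i
  | .negcopy i _ => i

def BAssign.maxVar : BAssign → ℕ
  | .const i _ => i
  | .copy i j => max i j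
  | .negcopy i j => max i j

/-- Tests `X_i = c`, `X_i = X_j`, `X_i != X_j`, and conjunctions thereof. -/
inductive BTest : Type
  | eqc (i : ℕ) (c : Bool)
  | eqv (i j : ℕ)
  | nev (i j : ℕ)
  | and (t₁ t₂ : BTest)
  deriving DecidableEq

def BTest.eval (s : ℕ → Bool) : BTest → Bool
  | .eqc i c => s i == c
  | .eqv i j => s i == s j
  | .nev i j => !(s i == s j)
  | .and t₁ t₂ => t₁.eval s && t₂.eval s

def BTest.size : BTest → ℕ
  | .eqc _ _ => 1
  | .eqv _ _ => 1
  | .nev _ _ => 1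
  | .and t₁ t₂ => t₁.size + t₂.size + 1

/-- Programs of `PL`: the empty program, assignments, sequencing,
if-then-else, nondeterministic choice, and the unconditional infinite loop. -/
inductive Prog : Type
  | empty
  | assign (a : BAssign)
  | seq (p q : Prog)
  | ite (c : BTest) (p q : Prog)
  | choose (ps : List Prog)
  | loop

mutual
  /-- The length of a program. -/
  def Prog.size : Prog → ℕ
    | .empty => 1
    | .assign _ => 1
    | .seq p q => p.size + q.size + 1
    | .ite c p q => c.size + p.size + q.size + 1
    | .choose ps => Prog.sizeList ps + 1
    | .loop => 1
  def Prog.sizeList : List Prog → ℕ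
    | [] => 0
    | p :: ps => p.size + Prog.sizeList ps
end

/-- The effect of an assignment under an intervention: writes to intervened
variables are ignored. -/
def applyAssign (itv : ℕ → Option Bool) (a : BAssign) (s : ℕ → Bool) : ℕ → Bool :=
  let v : Bool := match a with
    | .const _ c => c
    | .copy _ j => s j
    | .negcopy _ j => !(s j)
  if itv a.target = none then Function.update s a.target v else s

/-- Big-step semantics of `PL` under an intervention. A `loop`-statement has no
halting execution, and a `choose`-statement executes one of its branches. -/
inductive BigStep (itv : ℕ → Option Bool) : Prog → (ℕ → Bool) → (ℕ → Bool) → Prop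
  | empty (s) : BigStep itv .empty s s
  | assign (a s) : BigStep itv (.assign a) s (applyAssign itv a s)
  | seq {p q s t u} : BigStep itv p s t → BigStep itv q t u → BigStep itv (.seq p q) s u
  | iteT {c p q s t} : c.eval s = true → BigStep itv p s t → BigStep itv (.ite c p q) s t
  | iteF {c p q s t} : c.eval s = false → BigStep itv q s t → BigStep itv (.ite c p q) s t
  | choose {ps p s t} : p ∈ ps → BigStep itv p s t → BigStep itv (.choose ps) s t

/-- The set of result tapes of halting executions of the intervened program. -/
def ProgOutputs (P : Prog) (itv : ℕ → Option Bool) (x : ℕ → Bool) : Set (ℕ → Bool) :=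
  {y | BigStep itv P (initTape itv x) y}

/-- Satisfaction `(T_P, x) ⊨ φ` for the machine compiled from the program `P`
(whose executions are those of `P`). -/
def ProgSat (P : Prog) (x : ℕ → Bool) (φ : LForm) : Prop :=
  SatGen (fun α => ProgOutputs P α.itv x) x φ

end CausalSim
namespace CausalSim

/-! ### The canonical program fragment `PL†_{φ,C}` -/

def seqList : List Prog → Prog
  | [] => .empty
  | p :: ps => .seq p (seqList ps)

/-- Listing 1: `IsIntervened(X_i)` (with offset parameter `N`): performs the
toggle check for `X_i`, records the result in `X_{i+N}`, uses `X_{i+2N}` as a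
temporary variable, and leaves `X_i` unchanged. -/
def isIntervened (N i : ℕ) : Prog :=
  seqList [
    .assign (.copy (i + N) i),
    .assign (.negcopy i i),
    .assign (.copy (i + 2 * N) i),
    .ite (.eqv (i + 2 * N) (i + N))
      (.assign (.const (i + N) true)) (.assign (.const (i + N) false)),
    .assign (.negcopy i i)]

/-- One copy of `IsIntervened(X_i)` for each `1 ≤ i ≤ N`. -/
def isIntervenedAll (N : ℕ) : Prog :=
  seqList ((List.range' 1 N).map (isIntervened N))

/-- Listing 2: `HoldsFromIntervention(α)`: the condition checking that exactly
the variables occurring in `α` are marked as intervened and carry the values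
specified by `α`'s literals. -/
def holdsFromItv (N : ℕ) (α : Lint) : BTest :=
  ((List.range' 1 N).map fun i =>
    match α.itv i with
    | some b => BTest.and (.eqc i b) (.eqc (i + N) true)
    | none => BTest.eqc (i + N) false).foldr .and (.eqv 0 0)

/-- A sequence of assignment statements. -/
def assignSeq (l : List BAssign) : Prog := seqList (l.map Prog.assign)

/-- An admissible assignment sequence: assignments only to (pairwise distinct)
variables `X_i` with `1 ≤ i ≤ N`, mentioning only variables of index `≤ N`. -/
def GoodAssigns (N : ℕ) (l : List BAssign) : Prop :=
  (l.map BAssign.target).Nodup ∧ ∀ a ∈ l, a.maxVar ≤ N ∧ 1 ≤ a.target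

/-- The admissible bodies of the `if`-statements of a fragment program:
(a) a `choose`-statement with at most `C·|φ|` branches, each an admissible
assignment sequence; (b) a single admissible assignment sequence; or
(c) a single `loop`-statement — with (a) excluded for the deterministic
dialects and (c) excluded for the halting dialects. -/
def IfBody (C N sz : ℕ) (allowChoose allowLoop : Bool) (p : Prog) : Prop :=
  (allowChoose = true ∧ ∃ branches : List (List BAssign),
      p = .choose (branches.map assignSeq) ∧ branches.length ≤ C * sz ∧
      ∀ l ∈ branches, GoodAssigns N l) ∨
  (∃ l : List BAssign, p = assignSeq l ∧ GoodAssigns N l) ∨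
  (allowLoop = true ∧ p = .loop)

/-- Membership in the fragment `PL†_{φ,C}`: one copy of `IsIntervened(X_i)` for
each `1 ≤ i ≤ N`, followed by at most one `if`-statement with condition
`HoldsFromIntervention(α)` for each antecedent `α` occurring in `φ`, with an
admissible body. -/
def InFrag (C : ℕ) (φ : LForm) (allowChoose allowLoop : Bool) (P : Prog) : Prop :=
  ∃ ifs : List (Lint × Prog),
    (ifs.map Prod.fst).Nodup ∧
    (∀ q ∈ ifs, q.1 ∈ φ.ants ∧ IfBody C φ.maxAtom φ.size allowChoose allowLoop q.2) ∧
    P = .seq (isIntervenedAll φ.maxAtom)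
      (seqList (ifs.map fun q => Prog.ite (holdsFromItv φ.maxAtom q.1) q.2 .empty))

/-! ### Encodings into binary strings -/

def encNat (n : ℕ) : List Bool := List.replicate n true ++ [false]

def encListGen (enc : α → List Bool) (l : List α) : List Bool :=
  encNat l.length ++ l.flatMap enc

def encLit (p : ℕ × Bool) : List Bool := encNat p.1 ++ [p.2]

def encLint (α : Lint) : List Bool := encListGen encLit α.1

def encProp : PropForm → List Bool
  | .atom i => encNat 0 ++ encNat i
  | .neg φ => encNat 1 ++ encProp φ
  | .and φ ψ => encNat 2 ++ encProp φ ++ encProp ψ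
  | .or φ ψ => encNat 3 ++ encProp φ ++ encProp ψ

/-- A standard encoding of `L`-formulas as binary strings. -/
def encLForm : LForm → List Bool
  | .atom i => encNat 0 ++ encNat i
  | .cond α β => encNat 1 ++ encLint α ++ encProp β
  | .neg φ => encNat 2 ++ encLForm φ
  | .and φ ψ => encNat 3 ++ encLForm φ ++ encLForm ψ
  | .or φ ψ => encNat 4 ++ encLForm φ ++ encLForm ψ

def encAssign : BAssign → List Bool
  | .const i c => encNat 0 ++ encNat i ++ [c]
  | .copy i j => encNat 1 ++ encNat i ++ encNat j
  | .negcopy i j => encNat 2 ++ encNat i ++ encNat j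

def encTest : BTest → List Bool
  | .eqc i c => encNat 0 ++ encNat i ++ [c]
  | .eqv i j => encNat 1 ++ encNat i ++ encNat j
  | .nev i j => encNat 2 ++ encNat i ++ encNat j
  | .and t₁ t₂ => encNat 3 ++ encTest t₁ ++ encTest t₂

mutual
  /-- A standard encoding of programs as binary strings. -/
  def encProg : Prog → List Bool
    | .empty => encNat 0
    | .assign a => encNat 1 ++ encAssign a
    | .seq p q => encNat 2 ++ encProg p ++ encProg q
    | .ite c p q => encNat 3 ++ encTest c ++ encProg p ++ encProg q
    | .choose ps => encNat 4 ++ encNat ps.length ++ encProgList ps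
    | .loop => encNat 5
  def encProgList : List Prog → List Bool
    | [] => []
    | p :: ps => encProg p ++ encProgList ps
end

/-! ### Polynomial time, NP, and NP-completeness -/

/-- The identity finite encoding of binary strings. -/
def listBoolFinEncoding : Computability.Encoding (List Bool) Bool where
  encode := id
  decode := fun l => some l
  decode_encode := fun _ => rfl

/-- `f` is computable in polynomial time (by a Turing machine). -/
def PolyTimeFun (f : List Bool → List Bool) : Prop :=
  Nonempty (Turing.TM2ComputableInPolyTime listBoolFinEncoding.encode listBoolFinEncoding.encode f)

/-- Polynomial-time many-one reducibility. -/
def PolyReducible (L₁ L₂ : List Bool → Prop) : Prop :=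
  ∃ f : List Bool → List Bool, PolyTimeFun f ∧ ∀ s, L₁ s ↔ L₂ (f s)

/-- A self-delimiting pairing of binary strings. -/
def encPairStr (a b : List Bool) : List Bool := encNat a.length ++ a ++ b

/-- The class NP, via polynomial-time verifiers of polynomial-length certificates. -/
def InNP (L : List Bool → Prop) : Prop :=
  ∃ (V : List Bool → Bool) (p : Polynomial ℕ),
    PolyTimeFun (fun s => [V s]) ∧
    ∀ s, L s ↔ ∃ w : List Bool, w.length ≤ p.eval s.length ∧ V (encPairStr s w) = true

/-- NP-completeness with respect to polynomial-time many-one reductions. -/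
def NPComplete (L : List Bool → Prop) : Prop :=
  InNP L ∧ ∀ L' : List Bool → Prop, InNP L' → PolyReducible L' L

/-- The language Sim-Sat for a class of models: encodings of `L`-formulas
satisfied by some model in the class. -/
def SimSatLang (cls : CSM → Prop) : List Bool → Prop :=
  fun s => ∃ φ : LForm, s = encLForm φ ∧ ∃ M : CSM, cls M ∧ M.Sat φ

/-! ### Miscellaneous helpers -/

/-- The state description with support the list `xs`. -/
def stateOf (xs : List ℕ) : ℕ → Bool := fun i => decide (i ∈ xs)

theorem finSupp_stateOf (xs : List ℕ) : FinSupp (stateOf xs) := by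
  apply Set.Finite.subset (List.finite_toSet xs)
  intro i hi
  simpa [stateOf] using hi

/-- The model given by a machine and (the support of) a state description. -/
def csmOf (T : Machine) (xs : List ℕ) : CSM := ⟨T, stateOf xs, finSupp_stateOf xs⟩

/-- The singleton intervention `X_n := 1`. -/
def lintSingle (n : ℕ) : Lint := ⟨[(n, true)], List.isChain_singleton _⟩

/-- The set `Ω` of the non-compactness proposition, for `f : ℕ → ℕ`. -/
def Omega (f : ℕ → ℕ) : Set LForm :=
  {ψ | ∃ n, ψ = LForm.neg (.atom n)} ∪
  {ψ | ∃ n, ψ = LForm.dia (lintSingle n) (.atom (f n))} ∪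
  {ψ | ∃ n m, m ≠ n ∧ m ≠ f n ∧ ψ = LForm.cond (lintSingle n) (.neg (.atom m))}

end CausalSim

namespace CausalSim
namespace NF

/-! #### Semantic helpers -/

def LAnd : List LForm → LForm := List.foldr .and PropForm.top.toL
def LOr : List LForm → LForm := List.foldr .or PropForm.bot.toL
def PAnd : List PropForm → PropForm := List.foldr .and .top

@[simp] lemma top_eval (v) : PropForm.top.eval v = true := by
  simp [PropForm.top, PropForm.bot, PropForm.eval]

@[simp] lemma bot_eval (v) : PropForm.bot.eval v = false := by
  simp [PropForm.bot, PropForm.eval]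

@[simp] lemma toL_evalA (β : PropForm) (v w) : (β.toL).evalA v w = β.eval v := by
  induction β <;> simp [PropForm.toL, LForm.evalA, PropForm.eval, *]

@[simp] lemma evalA_topL (v w) : (PropForm.top.toL).evalA v w = true := by simp

@[simp] lemma evalA_botL (v w) : (PropForm.bot.toL).evalA v w = false := by simp

@[simp] lemma LAnd_evalA (l : List LForm) (v w) :
    (LAnd l).evalA v w = l.all (·.evalA v w) := by
  induction l with
  | nil => simp [LAnd]
  | cons x l ih => simp [LAnd, LForm.evalA] at ih ⊢; simp [ih]

@[simp] lemma LOr_evalA (l : List LForm) (v w) :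
    (LOr l).evalA v w = l.any (·.evalA v w) := by
  induction l with
  | nil => simp [LOr]
  | cons x l ih => simp [LOr, LForm.evalA] at ih ⊢; simp [ih]

@[simp] lemma PAnd_eval (l : List PropForm) (v) :
    (PAnd l).eval v = l.all (·.eval v) := by
  induction l with
  | nil => simp [PAnd]
  | cons x l ih => simp [PAnd, PropForm.eval] at ih ⊢; simp [ih]

lemma foldl_or_evalA (l : List LForm) (a : LForm) (v w) :
    (l.foldl .or a).evalA v w = (a.evalA v w || l.any (·.evalA v w)) := by
  induction l generalizing a with
  | nil => simp
  | cons x l ih => simp [ih, LForm.evalA, Bool.or_assoc]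

lemma foldl_and_evalA (l : List LForm) (a : LForm) (v w) :
    (l.foldl .and a).evalA v w = (a.evalA v w && l.all (·.evalA v w)) := by
  induction l generalizing a with
  | nil => simp
  | cons x l ih => simp [ih, LForm.evalA, Bool.and_assoc]

@[simp] lemma bigOrL_evalA (l : List LForm) (v w) :
    (bigOrL l).evalA v w = l.any (·.evalA v w) := by
  cases l with
  | nil => simp [bigOrL]
  | cons x l => simp [bigOrL, foldl_or_evalA]

@[simp] lemma bigAndL_evalA (l : List LForm) (v w) :
    (bigAndL l).evalA v w = l.all (·.evalA v w) := by
  cases l with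
  | nil => simp [bigAndL]
  | cons x l => simp [bigAndL, foldl_and_evalA]

lemma foldl_or_eval (l : List PropForm) (a : PropForm) (v) :
    (l.foldl .or a).eval v = (a.eval v || l.any (·.eval v)) := by
  induction l generalizing a with
  | nil => simp
  | cons x l ih => simp [ih, PropForm.eval, Bool.or_assoc]

@[simp] lemma bigOrP_eval (l : List PropForm) (v) :
    (bigOrP l).eval v = l.any (·.eval v) := by
  cases l with
  | nil => simp [bigOrP]
  | cons x l => simp [bigOrP, foldl_or_eval]

lemma foldl_and_eval (l : List PropForm) (a : PropForm) (v) :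
    (l.foldl .and a).eval v = (a.eval v && l.all (·.eval v)) := by
  induction l generalizing a with
  | nil => simp
  | cons x l ih => simp [ih, PropForm.eval, Bool.and_assoc]

@[simp] lemma lit_eval (p : ℕ × Bool) (v) : (PropForm.lit p).eval v = (v p.1 == p.2) := by
  obtain ⟨i, b⟩ := p; cases b <;> simp [PropForm.lit, PropForm.eval]

lemma foldl_lit_eval (l : List (ℕ × Bool)) (a : PropForm) (v) :
    (l.foldl (fun acc q => acc.and (.lit q)) a).eval v
      = (a.eval v && l.all (fun p => v p.1 == p.2)) := by
  induction l generalizing a with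
  | nil => simp
  | cons q l ih => simp [ih, PropForm.eval, Bool.and_assoc]

@[simp] lemma toProp_eval (α : Lint) (v) :
    (α.toProp).eval v = α.1.all (fun p => v p.1 == p.2) := by
  obtain ⟨l, hl⟩ := α
  cases l with
  | nil => simp [Lint.toProp]
  | cons p l => simp [Lint.toProp, foldl_lit_eval]

/-! #### Derivation combinators -/

variable {E : LForm → Prop}

lemma dtaut {φ : LForm} (h : ∀ v w, φ.evalA v w = true) : Deriv E φ := Deriv.taut h

/-- Provable equivalence. -/
def Eqv (E : LForm → Prop) (φ ψ : LForm) : Prop := Deriv E (φ.iff ψ)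

lemma evalA_imp (φ ψ : LForm) (v w) :
    (φ.imp ψ).evalA v w = (!φ.evalA v w || ψ.evalA v w) := rfl

lemma evalA_iff (φ ψ : LForm) (v w) :
    (φ.iff ψ).evalA v w = (φ.evalA v w == ψ.evalA v w) := by
  simp only [LForm.iff, LForm.imp, LForm.evalA]
  cases φ.evalA v w <;> cases ψ.evalA v w <;> rfl

lemma e_sem {φ ψ : LForm} (h : ∀ v w, φ.evalA v w = ψ.evalA v w) : Eqv E φ ψ :=
  dtaut fun v w => by simp [evalA_iff, h]

lemma e_refl (φ : LForm) : Eqv E φ φ := e_sem fun _ _ => rfl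

lemma e_mp {φ ψ : LForm} (h : Eqv E φ ψ) (h2 : Deriv E φ) : Deriv E ψ := by
  refine Deriv.mp (Deriv.mp (dtaut (φ := (φ.iff ψ).imp (φ.imp ψ)) ?_) h) h2
  intro v w
  simp only [evalA_imp, evalA_iff]
  cases φ.evalA v w <;> cases ψ.evalA v w <;> rfl

lemma e_symm {φ ψ : LForm} (h : Eqv E φ ψ) : Eqv E ψ φ := by
  refine Deriv.mp (dtaut (φ := (φ.iff ψ).imp (ψ.iff φ)) ?_) h
  intro v w
  simp only [evalA_imp, evalA_iff]
  cases φ.evalA v w <;> cases ψ.evalA v w <;> rfl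

lemma e_trans {φ ψ χ : LForm} (h1 : Eqv E φ ψ) (h2 : Eqv E ψ χ) : Eqv E φ χ := by
  refine Deriv.mp (Deriv.mp
    (dtaut (φ := (φ.iff ψ).imp ((ψ.iff χ).imp (φ.iff χ))) ?_) h1) h2
  intro v w
  simp only [evalA_imp, evalA_iff]
  cases φ.evalA v w <;> cases ψ.evalA v w <;> cases χ.evalA v w <;> rfl

lemma e_neg {φ ψ : LForm} (h : Eqv E φ ψ) : Eqv E (.neg φ) (.neg ψ) := by
  refine Deriv.mp (dtaut (φ := (φ.iff ψ).imp ((LForm.neg φ).iff (.neg ψ))) ?_) h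
  intro v w
  simp only [evalA_imp, evalA_iff, LForm.evalA]
  cases φ.evalA v w <;> cases ψ.evalA v w <;> rfl

lemma e_and {φ ψ φ' ψ' : LForm} (h1 : Eqv E φ φ') (h2 : Eqv E ψ ψ') :
    Eqv E (.and φ ψ) (.and φ' ψ') := by
  refine Deriv.mp (Deriv.mp (dtaut
    (φ := (φ.iff φ').imp ((ψ.iff ψ').imp ((LForm.and φ ψ).iff (.and φ' ψ')))) ?_) h1) h2
  intro v w
  simp only [evalA_imp, evalA_iff, LForm.evalA]
  cases φ.evalA v w <;> cases φ'.evalA v w <;> cases ψ.evalA v w <;> cases ψ'.evalA v w <;> rfl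

lemma e_or {φ ψ φ' ψ' : LForm} (h1 : Eqv E φ φ') (h2 : Eqv E ψ ψ') :
    Eqv E (.or φ ψ) (.or φ' ψ') := by
  refine Deriv.mp (Deriv.mp (dtaut
    (φ := (φ.iff φ').imp ((ψ.iff ψ').imp ((LForm.or φ ψ).iff (.or φ' ψ')))) ?_) h1) h2
  intro v w
  simp only [evalA_imp, evalA_iff, LForm.evalA]
  cases φ.evalA v w <;> cases φ'.evalA v w <;> cases ψ.evalA v w <;> cases ψ'.evalA v w <;> rfl

lemma e_of_both {φ ψ : LForm} (h1 : Deriv E φ) (h2 : Deriv E ψ) : Eqv E φ ψ := by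
  refine Deriv.mp (Deriv.mp (dtaut (φ := φ.imp (ψ.imp (φ.iff ψ))) ?_) h1) h2
  intro v w
  simp only [evalA_imp, evalA_iff]
  cases φ.evalA v w <;> cases ψ.evalA v w <;> rfl

lemma iff_intro {φ ψ : LForm} (h1 : Deriv E (φ.imp ψ)) (h2 : Deriv E (ψ.imp φ)) :
    Eqv E φ ψ := by
  refine Deriv.mp (Deriv.mp (dtaut
    (φ := (φ.imp ψ).imp ((ψ.imp φ).imp (φ.iff ψ))) ?_) h1) h2
  intro v w
  simp only [evalA_imp, evalA_iff]
  cases φ.evalA v w <;> cases ψ.evalA v w <;> rfl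

lemma d_imp_trans {φ ψ χ : LForm} (h1 : Deriv E (φ.imp ψ)) (h2 : Deriv E (ψ.imp χ)) :
    Deriv E (φ.imp χ) := by
  refine Deriv.mp (Deriv.mp (dtaut
    (φ := (φ.imp ψ).imp ((ψ.imp χ).imp (φ.imp χ))) ?_) h1) h2
  intro v w
  simp only [evalA_imp]
  cases φ.evalA v w <;> cases ψ.evalA v w <;> cases χ.evalA v w <;> rfl

lemma d_combine {χ φ ψ : LForm} (h1 : Deriv E (χ.imp φ)) (h2 : Deriv E (χ.imp ψ)) :
    Deriv E (χ.imp (.and φ ψ)) := by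
  refine Deriv.mp (Deriv.mp (dtaut
    (φ := (χ.imp φ).imp ((χ.imp ψ).imp (χ.imp (.and φ ψ)))) ?_) h1) h2
  intro v w
  simp only [evalA_imp, LForm.evalA]
  cases χ.evalA v w <;> cases φ.evalA v w <;> cases ψ.evalA v w <;> rfl

lemma d_uncurry {φ ψ χ : LForm} (h : Deriv E (φ.imp (ψ.imp χ))) :
    Deriv E ((LForm.and φ ψ).imp χ) := by
  refine Deriv.mp (dtaut
    (φ := (φ.imp (ψ.imp χ)).imp ((LForm.and φ ψ).imp χ)) ?_) h
  intro v w
  simp only [evalA_imp, LForm.evalA]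
  cases φ.evalA v w <;> cases ψ.evalA v w <;> cases χ.evalA v w <;> rfl

/-! #### Modal lemmas -/

lemma prop_imp_derivable {a b : PropForm} (h : ∀ v, a.eval v = true → b.eval v = true) :
    Deriv E ((a.imp b).toL) := by
  refine dtaut fun v w => ?_
  have : (a.imp b).eval v = true := by
    simp only [PropForm.imp, PropForm.eval]
    cases ha : a.eval v
    · rfl
    · simp [h v ha]
  simpa using this

lemma box_mono {a b : PropForm} (α : Lint) (h : ∀ v, a.eval v = true → b.eval v = true) :
    Deriv E ((LForm.cond α a).imp (.cond α b)) :=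
  Deriv.rw α (prop_imp_derivable h)

lemma box_congr {a b : PropForm} (α : Lint) (h : ∀ v, a.eval v = b.eval v) :
    Eqv E (.cond α a) (.cond α b) :=
  iff_intro (box_mono α fun v hv => (h v) ▸ hv) (box_mono α fun v hv => (h v) ▸ hv)

lemma box_top (α : Lint) : Deriv E (.cond α .top) := by
  refine Deriv.mp (box_mono α ?_) (Deriv.axR α)
  intro v _
  simp

lemma box_and {a b : PropForm} (α : Lint) :
    Eqv E (.cond α (a.and b)) (.and (.cond α a) (.cond α b)) := by
  refine iff_intro ?_ ?_
  · exact d_combine (box_mono α fun v hv => by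
        simpa [PropForm.eval, Bool.and_eq_true] using (by
          simp only [PropForm.eval, Bool.and_eq_true] at hv; exact hv.1))
      (box_mono α fun v hv => by
        simp only [PropForm.eval, Bool.and_eq_true] at hv; exact hv.2)
  · refine d_uncurry ?_
    have hK := Deriv.axK (extra := E) α b (a.and b)
    have h1 : Deriv E ((LForm.cond α a).imp (.cond α (b.imp (a.and b)))) := by
      refine box_mono α fun v hv => ?_
      simp only [PropForm.imp, PropForm.eval]
      cases hb : b.eval v <;> simp [hv, hb]
    exact d_imp_trans h1 hK


/-! #### DNF machinery -/

def clEval (u : ℕ → Bool) (c : List (ℕ × Bool)) : Bool := c.all fun p => u p.1 == p.2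

def dnfEval (u : ℕ → Bool) (cs : List (List (ℕ × Bool))) : Bool := cs.any (clEval u)

def dnfAux : PropForm → Bool → List (List (ℕ × Bool))
  | .atom i, b => [[(i, b)]]
  | .neg σ, b => dnfAux σ (!b)
  | .and σ τ, true => (dnfAux σ true).flatMap fun c => (dnfAux τ true).map (c ++ ·)
  | .and σ τ, false => dnfAux σ false ++ dnfAux τ false
  | .or σ τ, true => dnfAux σ true ++ dnfAux τ true
  | .or σ τ, false => (dnfAux σ false).flatMap fun c => (dnfAux τ false).map (c ++ ·)

@[simp] lemma clEval_append (u c d) : clEval u (c ++ d) = (clEval u c && clEval u d) :=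
  List.all_append

lemma dnfEval_append (u cs ds) :
    dnfEval u (cs ++ ds) = (dnfEval u cs || dnfEval u ds) := List.any_append

lemma any_and_left (x : Bool) (ds : List (List (ℕ × Bool))) (g : List (ℕ × Bool) → Bool) :
    ds.any (fun d => x && g d) = (x && ds.any g) := by
  induction ds with
  | nil => simp
  | cons d ds ih => simp [ih, Bool.and_or_distrib_left]

lemma dnfEval_prod (u cs ds) :
    dnfEval u (cs.flatMap fun c => ds.map (c ++ ·)) = (dnfEval u cs && dnfEval u ds) := by
  induction cs with
  | nil => simp [dnfEval]
  | cons c cs ih =>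
      simp only [List.flatMap_cons, dnfEval, List.any_append, List.any_cons,
        List.any_map] at ih ⊢
      rw [ih]
      have h : (ds.any ((clEval u) ∘ (c ++ ·))) = (clEval u c && ds.any (clEval u)) := by
        simp only [Function.comp_def, clEval_append]
        exact any_and_left _ _ _
      rw [h, Bool.and_or_distrib_right]

lemma dnfAux_spec (σ : PropForm) : ∀ (b : Bool) (u), dnfEval u (dnfAux σ b) = (σ.eval u == b) := by
  induction σ with
  | atom i => intro b u; simp [dnfAux, dnfEval, clEval, PropForm.eval]
  | neg σ ih =>
      intro b u
      simp only [dnfAux, PropForm.eval, ih]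
      cases σ.eval u <;> cases b <;> rfl
  | and σ τ ih₁ ih₂ =>
      intro b u
      cases b <;>
        simp only [dnfAux, dnfEval_append, dnfEval_prod, ih₁, ih₂, PropForm.eval] <;>
        cases σ.eval u <;> cases τ.eval u <;> rfl
  | or σ τ ih₁ ih₂ =>
      intro b u
      cases b <;>
        simp only [dnfAux, dnfEval_append, dnfEval_prod, ih₁, ih₂, PropForm.eval] <;>
        cases σ.eval u <;> cases τ.eval u <;> rfl

/-! #### Turning a consistent list of literals into an `Lint` -/

def keyBound (c : List (ℕ × Bool)) : ℕ := (c.map Prod.fst).foldr max 0 + 1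

lemma lt_keyBound {c : List (ℕ × Bool)} {p : ℕ × Bool} (hp : p ∈ c) : p.1 < keyBound c := by
  have : ∀ (l : List ℕ) (x : ℕ), x ∈ l → x ≤ l.foldr max 0 := by
    intro l
    induction l with
    | nil => simp
    | cons a l ih =>
        intro x hx
        rcases List.mem_cons.1 hx with rfl | hx
        · exact le_max_left _ _
        · exact le_trans (ih x hx) (le_max_right _ _)
  exact Nat.lt_succ_of_le (this _ _ (List.mem_map_of_mem (f := Prod.fst) hp))

def mkF (c : List (ℕ × Bool)) (i : ℕ) : Option (ℕ × Bool) :=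
  if (i, true) ∈ c then some (i, true) else if (i, false) ∈ c then some (i, false) else none

lemma mkF_mem {c i p} (h : p ∈ mkF c i) : p.1 = i ∧ p ∈ c := by
  unfold mkF at h
  split at h
  · simp only [Option.mem_def, Option.some.injEq] at h
    subst h
    exact ⟨rfl, by assumption⟩
  · split at h
    · simp only [Option.mem_def, Option.some.injEq] at h
      subst h
      exact ⟨rfl, by assumption⟩
    · cases h

def mkList (c : List (ℕ × Bool)) : List (ℕ × Bool) :=
  (List.range (keyBound c)).filterMap (mkF c)

lemma mkList_chain' (c) : (mkList c).Chain' fun p q => p.1 < q.1 := by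
  refine List.Pairwise.isChain
    (List.Pairwise.filterMap (R := (· < ·)) (mkF c) ?_ (List.pairwise_lt_range (n := _)))
  intro i j hij p hp q hq
  rw [(mkF_mem hp).1, (mkF_mem hq).1]
  exact hij

def Consistent (c : List (ℕ × Bool)) : Prop := ∀ p ∈ c, ∀ q ∈ c, p.1 = q.1 → p.2 = q.2

instance : DecidablePred Consistent := fun c => by unfold Consistent; exact inferInstance

def mkLint (c : List (ℕ × Bool)) : Option Lint :=
  if Consistent c then some ⟨mkList c, mkList_chain' c⟩ else none

lemma mem_mkList_of_mem {c : List (ℕ × Bool)} (hc : Consistent c) {p} (hp : p ∈ c) :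
    p ∈ mkList c := by
  refine List.mem_filterMap.2 ⟨p.1, List.mem_range.2 (lt_keyBound hp), ?_⟩
  obtain ⟨i, b⟩ := p
  cases b
  · have : (i, true) ∉ c := fun ht => by simpa using hc _ ht _ hp rfl
    simp [mkF, this, hp]
  · simp [mkF, hp]

lemma mem_of_mem_mkList {c : List (ℕ × Bool)} {p} (hp : p ∈ mkList c) : p ∈ c := by
  obtain ⟨i, _, hi⟩ := List.mem_filterMap.1 hp
  exact (mkF_mem hi).2

lemma mkLint_some_eval {c γ} (h : mkLint c = some γ) (u) : clEval u γ.1 = clEval u c := by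
  unfold mkLint at h
  split at h
  · cases h
    rename_i hc
    refine Bool.eq_iff_iff.mpr ?_
    simp only [clEval, List.all_eq_true, beq_iff_eq]
    exact ⟨fun H p hp => H p (mem_mkList_of_mem hc hp),
      fun H p hp => H p (mem_of_mem_mkList hp)⟩
  · cases h

lemma mkLint_none_eval {c} (h : mkLint c = none) (u) : clEval u c = false := by
  unfold mkLint at h
  split at h
  · cases h
  · rename_i hc
    unfold Consistent at hc
    push_neg at hc
    obtain ⟨p, hp, q, hq, hk, hv⟩ := hc
    rw [Bool.eq_false_iff]
    intro hall
    rw [clEval, List.all_eq_true] at hall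
    have h1 := hall p hp
    have h2 := hall q hq
    rw [beq_iff_eq] at h1 h2
    exact hv (by rw [← h1, hk, h2])

lemma filterMap_mkLint_any (cs : List (List (ℕ × Bool))) (u) :
    ((cs.filterMap mkLint).any fun γ => clEval u γ.1) = cs.any (clEval u) := by
  induction cs with
  | nil => rfl
  | cons c cs ih =>
      cases hm : mkLint c with
      | none => simp [hm, ih, mkLint_none_eval hm u]
      | some γ => simp [hm, ih, mkLint_some_eval hm u]

/-- The list of `L_int`-conjuncts of a DNF of `σ` (if `b = true`) or of `¬σ` (`b = false`). -/
def dnfL (σ : PropForm) (b : Bool) : List Lint := (dnfAux σ b).filterMap mkLint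

lemma dnfL_spec (σ : PropForm) (b : Bool) (u) :
    ((dnfL σ b).any fun γ => γ.toProp.eval u) = (σ.eval u == b) := by
  have h : ((dnfL σ b).any fun γ => γ.toProp.eval u)
      = ((dnfL σ b).any fun γ => clEval u γ.1) := by
    simp [clEval]
  rw [h, dnfL, filterMap_mkLint_any]
  exact dnfAux_spec σ b u


/-! #### Substitution skeletons -/

def substL : PropForm → (ℕ → LForm) → LForm
  | .atom i, ι => ι i
  | .neg σ, ι => .neg (substL σ ι)
  | .and σ τ, ι => .and (substL σ ι) (substL τ ι)
  | .or σ τ, ι => .or (substL σ ι) (substL τ ι)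

lemma substL_evalA (σ : PropForm) (ι v w) :
    (substL σ ι).evalA v w = σ.eval (fun n => (ι n).evalA v w) := by
  induction σ <;> simp [substL, LForm.evalA, PropForm.eval, *]

def shiftP (k : ℕ) : PropForm → PropForm
  | .atom i => .atom (i + k)
  | .neg σ => .neg (shiftP k σ)
  | .and σ τ => .and (shiftP k σ) (shiftP k τ)
  | .or σ τ => .or (shiftP k σ) (shiftP k τ)

def below : PropForm → ℕ → Prop
  | .atom i, k => i < k
  | .neg σ, k => below σ k
  | .and σ τ, k => below σ k ∧ below τ k
  | .or σ τ, k => below σ k ∧ below τ k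

lemma below_mono {σ k k'} (hk : k ≤ k') (h : below σ k) : below σ k' := by
  induction σ <;> simp_all [below]
  omega

/-- Atoms of skeletons: `X`-atoms or "good" conditional atoms `(α, γ)`. -/
abbrev GAtom := ℕ ⊕ (Lint × Lint)

/-- A propositional formula equivalent to `¬γ`, presented as a disjunction of
`L_int`-conjunctions. -/
def negD (γ : Lint) : PropForm := bigOrP ((dnfL γ.toProp false).map Lint.toProp)

lemma map_any {α β : Type*} (l : List α) (g : α → β) (p : β → Bool) :
    (l.map g).any p = l.any fun x => p (g x) := by
  induction l with
  | nil => rfl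
  | cons a l ih => simp only [List.map_cons, List.any_cons, ih]

lemma map_all {α β : Type*} (l : List α) (g : α → β) (p : β → Bool) :
    (l.map g).all p = l.all fun x => p (g x) := by
  induction l with
  | nil => rfl
  | cons a l ih => simp only [List.map_cons, List.all_cons, ih]

lemma negD_eval (γ : Lint) (v) : (negD γ).eval v = !(γ.toProp.eval v) := by
  have h := dnfL_spec γ.toProp false v
  rw [negD, bigOrP_eval, map_any, h]
  cases γ.toProp.eval v <;> rfl

def render : GAtom → LForm
  | .inl i => .atom i
  | .inr (α, γ) => .cond α (negD γ)

def ιof (L : List GAtom) : ℕ → LForm := fun n => render (L.getD n (.inl 0))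

lemma substL_append_left {σ : PropForm} {L₁ L₂ : List GAtom} (h : below σ L₁.length) :
    substL σ (ιof (L₁ ++ L₂)) = substL σ (ιof L₁) := by
  induction σ with
  | atom i => simp only [substL, ιof]; rw [List.getD_append _ _ _ _ h]
  | neg σ ih => simp only [substL]; rw [ih h]
  | and σ τ ih₁ ih₂ => simp only [substL]; rw [ih₁ h.1, ih₂ h.2]
  | or σ τ ih₁ ih₂ => simp only [substL]; rw [ih₁ h.1, ih₂ h.2]

lemma substL_shift (σ : PropForm) (L₁ L₂ : List GAtom) :
    substL (shiftP L₁.length σ) (ιof (L₁ ++ L₂)) = substL σ (ιof L₂) := by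
  induction σ with
  | atom i =>
      simp only [substL, shiftP, ιof]
      rw [List.getD_append_right _ _ _ _ (Nat.le_add_left _ _)]
      simp
  | neg σ ih => simp only [substL, shiftP]; rw [ih]
  | and σ τ ih₁ ih₂ => simp only [substL, shiftP]; rw [ih₁, ih₂]
  | or σ τ ih₁ ih₂ => simp only [substL, shiftP]; rw [ih₁, ih₂]

def condSkel (m : ℕ) : PropForm :=
  ((List.range m).map PropForm.atom).foldr .and (.or (.atom m) (.neg (.atom m)))

lemma foldr_and_eval (l : List PropForm) (a : PropForm) (v) :
    (l.foldr .and a).eval v = (l.all (·.eval v) && a.eval v) := by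
  induction l with
  | nil => simp
  | cons x l ih => simp [ih, PropForm.eval, Bool.and_assoc]

lemma condSkel_eval (m u) : (condSkel m).eval u = (List.range m).all u := by
  simp only [condSkel, foldr_and_eval, map_all, PropForm.eval]
  cases h : (List.range m).all u <;> simp [h]

lemma below_condSkel (m : ℕ) : below (condSkel m) (m + 1) := by
  unfold condSkel
  have hbase : below (PropForm.or (.atom m) (.neg (.atom m))) (m + 1) := by
    simp [below]
  have : ∀ l : List ℕ, (∀ i ∈ l, i < m + 1) →
      below ((l.map PropForm.atom).foldr .and (.or (.atom m) (.neg (.atom m)))) (m + 1) := by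
    intro l
    induction l with
    | nil => intro _; exact hbase
    | cons i l ih =>
        intro hl
        exact ⟨hl i (by simp), ih fun j hj => hl j (by simp [hj])⟩
  exact this _ fun i hi => by have := List.mem_range.1 hi; omega

/-! #### The abstraction of a formula -/

def abs : LForm → PropForm × List GAtom
  | .atom i => (.atom 0, [.inl i])
  | .cond α β => (condSkel (dnfL β false).length,
      (dnfL β false).map (fun γ => .inr (α, γ)) ++ [.inl 0])
  | .neg φ => ((abs φ).1.neg, (abs φ).2)
  | .and φ ψ => ((abs φ).1.and (shiftP (abs φ).2.length (abs ψ).1), (abs φ).2 ++ (abs ψ).2)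
  | .or φ ψ => ((abs φ).1.or (shiftP (abs φ).2.length (abs ψ).1), (abs φ).2 ++ (abs ψ).2)

lemma below_shiftP {σ k} (j) (h : below σ k) : below (shiftP j σ) (j + k) := by
  induction σ <;> simp_all [below, shiftP]
  omega

lemma abs_below (φ : LForm) : below (abs φ).1 (abs φ).2.length := by
  induction φ with
  | atom i => simp [abs, below]
  | cond α β => simpa [abs] using below_condSkel (dnfL β false).length
  | neg φ ih => exact ih
  | and φ ψ ih₁ ih₂ =>
      simp only [abs, below, List.length_append]
      exact ⟨below_mono (Nat.le_add_right _ _) ih₁, below_shiftP _ ih₂⟩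
  | or φ ψ ih₁ ih₂ =>
      simp only [abs, below, List.length_append]
      exact ⟨below_mono (Nat.le_add_right _ _) ih₁, below_shiftP _ ih₂⟩

variable {E : LForm → Prop}

lemma box_split (α : Lint) (L : List PropForm) :
    Eqv E (.cond α (PAnd L)) (LAnd (L.map (.cond α ·))) := by
  induction L with
  | nil => exact e_of_both (box_top α) (dtaut fun v w => by simp [LAnd])
  | cons a L ih =>
      have h1 : Eqv E (.cond α (PAnd (a :: L))) (.and (.cond α a) (.cond α (PAnd L))) :=
        box_and α
      exact e_trans h1 (e_and (e_refl _) ih)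

lemma all_not_any (l : List Lint) (f : Lint → Bool) :
    (l.all fun γ => !(f γ)) = !(l.any f) := by
  induction l <;> simp_all

lemma all_range_getD (A : List GAtom) (rest : List GAtom) (g : GAtom → Bool) (d) :
    ((List.range A.length).all fun i => g ((A ++ rest).getD i d)) = A.all g := by
  induction A with
  | nil => simp
  | cons a A ih =>
      rw [List.cons_append, show (a :: A).length = A.length + 1 from rfl,
        List.range_succ_eq_map]
      simp only [List.all_cons, List.all_map, Function.comp_def, List.getD_cons_zero,
        List.getD_cons_succ]
      rw [ih]


lemma all_range_getD_evalA (A rest : List GAtom) (v w) (d : GAtom) :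
    ((List.range A.length).all fun i => (render ((A ++ rest).getD i d)).evalA v w)
      = A.all (fun x => (render x).evalA v w) :=
  by exact all_range_getD A rest (fun x => LForm.evalA v w (render x)) d

lemma abs_eqv (φ : LForm) : Eqv E φ (substL (abs φ).1 (ιof (abs φ).2)) := by
  induction φ with
  | atom i => exact e_refl _
  | cond α β =>
      simp only [abs]
      have hsem : ∀ v, β.eval v = (PAnd ((dnfL β false).map negD)).eval v := by
        intro v
        have hβ := dnfL_spec β false v
        rw [PAnd_eval, map_all]
        simp only [negD_eval]
        rw [all_not_any, hβ]
        cases β.eval v <;> rfl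
      have h1 : Eqv E (.cond α β) (.cond α (PAnd ((dnfL β false).map negD))) :=
        box_congr α hsem
      have h2 := box_split (E := E) α ((dnfL β false).map negD)
      have h3 : Eqv E (LAnd (((dnfL β false).map negD).map (.cond α ·)))
          (substL (condSkel (dnfL β false).length)
            (ιof ((dnfL β false).map (fun γ => .inr (α, γ)) ++ [.inl 0]))) := by
        apply e_sem
        intro v w
        rw [LAnd_evalA, substL_evalA, condSkel_eval]
        have hlen : (dnfL β false).length
            = ((dnfL β false).map (fun γ => (Sum.inr (α, γ) : GAtom))).length := by simp
        rw [hlen]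
        simp only [ιof]
        rw [all_range_getD_evalA, map_all, map_all, map_all]
        rfl
      exact e_trans h1 (e_trans h2 h3)
  | neg φ ih => exact e_neg ih
  | and φ ψ ih₁ ih₂ =>
      have e1 := substL_append_left (σ := (abs φ).1) (L₂ := (abs ψ).2) (abs_below φ)
      have e2 := substL_shift (abs ψ).1 (abs φ).2 (abs ψ).2
      show Eqv E (.and φ ψ) (.and
        (substL (abs φ).1 (ιof ((abs φ).2 ++ (abs ψ).2)))
        (substL (shiftP (abs φ).2.length (abs ψ).1) (ιof ((abs φ).2 ++ (abs ψ).2))))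
      rw [e1, e2]
      exact e_and ih₁ ih₂
  | or φ ψ ih₁ ih₂ =>
      have e1 := substL_append_left (σ := (abs φ).1) (L₂ := (abs ψ).2) (abs_below φ)
      have e2 := substL_shift (abs ψ).1 (abs φ).2 (abs ψ).2
      show Eqv E (.or φ ψ) (.or
        (substL (abs φ).1 (ιof ((abs φ).2 ++ (abs ψ).2)))
        (substL (shiftP (abs φ).2.length (abs ψ).1) (ιof ((abs φ).2 ++ (abs ψ).2))))
      rw [e1, e2]
      exact e_or ih₁ ih₂


/-! #### Generic list-Bool helpers -/

lemma all_congr' {α : Type*} (l : List α) (f g : α → Bool) (h : ∀ x ∈ l, f x = g x) :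
    l.all f = l.all g := by
  induction l with
  | nil => rfl
  | cons a l ih =>
      simp only [List.all_cons]
      rw [h a (by simp), ih fun x hx => h x (by simp [hx])]

lemma any_congr' {α : Type*} (l : List α) (f g : α → Bool) (h : ∀ x ∈ l, f x = g x) :
    l.any f = l.any g := by
  induction l with
  | nil => rfl
  | cons a l ih =>
      simp only [List.any_cons]
      rw [h a (by simp), ih fun x hx => h x (by simp [hx])]

lemma any_and_left' {α : Type*} (x : Bool) (l : List α) (g : α → Bool) :
    l.any (fun a => x && g a) = (x && l.any g) := by
  induction l with
  | nil => simp
  | cons a l ih => simp [ih, Bool.and_or_distrib_left]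

lemma any_and_right' {α : Type*} (x : Bool) (l : List α) (g : α → Bool) :
    l.any (fun a => g a && x) = (l.any g && x) := by
  induction l with
  | nil => simp
  | cons a l ih => simp [ih, Bool.and_or_distrib_right]

lemma any_flatMap' {α β : Type*} (l : List α) (f : α → List β) (p : β → Bool) :
    (l.flatMap f).any p = l.any fun a => (f a).any p := by
  induction l with
  | nil => rfl
  | cons a l ih => simp only [List.flatMap_cons, List.any_append, List.any_cons, ih]

lemma filterMap_mkLint_any' {α : Type*} (l : List α) (h : α → List (ℕ × Bool)) (u) :
    ((l.filterMap fun a => mkLint (h a)).any fun γ => clEval u γ.1)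
      = l.any fun a => clEval u (h a) := by
  induction l with
  | nil => rfl
  | cons a l ih =>
      cases hm : mkLint (h a) with
      | none => simp [List.filterMap_cons, hm, ih, mkLint_none_eval hm u]
      | some γ => simp [List.filterMap_cons, hm, ih, mkLint_some_eval hm u]

lemma toProp_eval_clEval (γ : Lint) (v) : γ.toProp.eval v = clEval v γ.1 := by
  simp [clEval]

/-! #### Clause assembly -/

def gAt (as : List GAtom) (n : ℕ) : GAtom := as.getD n (.inl 0)

def litRender (as : List GAtom) (p : ℕ × Bool) : LForm :=
  if p.2 then render (gAt as p.1) else .neg (render (gAt as p.1))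

def LC (as : List GAtom) (c : List (ℕ × Bool)) : LForm := LAnd (c.map (litRender as))

lemma LC_evalA (as c v w) :
    (LC as c).evalA v w = clEval (fun n => (render (gAt as n)).evalA v w) c := by
  rw [LC, LAnd_evalA, map_all]
  refine all_congr' _ _ _ fun p _ => ?_
  cases hb : p.2 <;> simp [litRender, hb, LForm.evalA]

def propLit (as : List GAtom) (p : ℕ × Bool) : Option PropForm :=
  match gAt as p.1 with
  | .inl i => some (PropForm.lit (i, p.2))
  | .inr _ => none

def boxEntry (as : List GAtom) (p : ℕ × Bool) : Option (Lint × List Lint) :=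
  if p.2 then
    match gAt as p.1 with
    | .inr (α, γ) => some (α, dnfL γ.toProp false)
    | .inl _ => none
  else none

def diaEntry (as : List GAtom) (p : ℕ × Bool) : Option (Lint × Lint) :=
  if p.2 then none
  else
    match gAt as p.1 with
    | .inr q => some q
    | .inl _ => none

def boxRender (q : Lint × List Lint) : LForm := .cond q.1 (bigOrP (q.2.map Lint.toProp))

def negBoxRender (q : Lint × Lint) : LForm := .neg (render (.inr q))

/-! #### Merging boxes with equal antecedents -/

def mergeJ (J J' : List Lint) : List Lint :=
  J.flatMap fun γ => J'.filterMap fun γ' => mkLint (γ.1 ++ γ'.1)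

lemma mergeJ_eval (J J' : List Lint) (v) :
    ((mergeJ J J').any fun γ => γ.toProp.eval v)
      = ((J.any fun γ => γ.toProp.eval v) && (J'.any fun γ => γ.toProp.eval v)) := by
  rw [show ((mergeJ J J').any fun γ => γ.toProp.eval v)
      = ((mergeJ J J').any fun γ => clEval v γ.1) from
    any_congr' _ _ _ fun γ _ => toProp_eval_clEval γ v]
  rw [mergeJ, any_flatMap']
  rw [show (J.any fun γ => (J'.filterMap fun γ' => mkLint (γ.1 ++ γ'.1)).any
        fun γ'' => clEval v γ''.1)
      = (J.any fun γ => clEval v γ.1 && (J'.any fun γ' => clEval v γ'.1)) from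
    any_congr' _ _ _ fun γ _ => by
      rw [filterMap_mkLint_any' J' (fun γ' => γ.1 ++ γ'.1) v]
      rw [show (J'.any fun γ' => clEval v (γ.1 ++ γ'.1))
          = (J'.any fun γ' => clEval v γ.1 && clEval v γ'.1) from
        any_congr' _ _ _ fun γ' _ => clEval_append v γ.1 γ'.1]
      exact any_and_left' _ _ _]
  rw [any_and_right']
  congr 1 <;> exact (any_congr' _ _ _ fun γ _ => (toProp_eval_clEval γ v)).symm

def insertBox (p : Lint × List Lint) : List (Lint × List Lint) → List (Lint × List Lint)
  | [] => [p]
  | q :: l => if p.1 = q.1 then (q.1, mergeJ p.2 q.2) :: l else q :: insertBox p l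

def mergeBoxes : List (Lint × List Lint) → List (Lint × List Lint) :=
  List.foldr insertBox []

lemma mem_fst_insertBox {p : Lint × List Lint} {l} {a : Lint} :
    a ∈ (insertBox p l).map Prod.fst ↔ a = p.1 ∨ a ∈ l.map Prod.fst := by
  induction l with
  | nil => simp [insertBox]
  | cons q l ih =>
      by_cases h : p.1 = q.1
      · simp only [insertBox, if_pos h, List.map_cons, List.mem_cons]
        rw [h]
        tauto
      · simp [insertBox, h, ih]
        tauto

lemma nodup_insertBox {p : Lint × List Lint} {l} (h : (l.map Prod.fst).Nodup) :
    ((insertBox p l).map Prod.fst).Nodup := by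
  induction l with
  | nil => simp [insertBox]
  | cons q l ih =>
      by_cases hpq : p.1 = q.1
      · simpa [insertBox, hpq] using h
      · simp only [List.map_cons, List.nodup_cons] at h
        simp only [insertBox, hpq, if_false, List.map_cons, List.nodup_cons]
        refine ⟨?_, ih h.2⟩
        rw [mem_fst_insertBox]
        rintro (h' | hx)
        · exact hpq h'.symm
        · exact h.1 hx

lemma nodup_mergeBoxes (bs : List (Lint × List Lint)) :
    ((mergeBoxes bs).map Prod.fst).Nodup := by
  induction bs with
  | nil => simp [mergeBoxes]
  | cons p bs ih => exact nodup_insertBox ih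

variable {E : LForm → Prop}

lemma box_merge (α : Lint) (J J' : List Lint) :
    Eqv E (.and (boxRender (α, J)) (boxRender (α, J'))) (boxRender (α, mergeJ J J')) := by
  refine e_trans (e_symm (box_and α)) (box_congr α fun v => ?_)
  show ((bigOrP (J.map Lint.toProp)).and (bigOrP (J'.map Lint.toProp))).eval v
      = (bigOrP ((mergeJ J J').map Lint.toProp)).eval v
  simp only [PropForm.eval, bigOrP_eval, map_any]
  exact (mergeJ_eval J J' v).symm

lemma LAnd_cons (x : LForm) (l : List LForm) : LAnd (x :: l) = .and x (LAnd l) := rfl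

lemma e_LAnd_map {α : Type*} (l : List α) (f g : α → LForm)
    (h : ∀ x ∈ l, Eqv E (f x) (g x)) : Eqv E (LAnd (l.map f)) (LAnd (l.map g)) := by
  induction l with
  | nil => exact e_refl _
  | cons a l ih =>
      simp only [List.map_cons, LAnd_cons]
      exact e_and (h a (by simp)) (ih fun x hx => h x (by simp [hx]))

lemma e_LOr_map {α : Type*} (l : List α) (f g : α → LForm)
    (h : ∀ x ∈ l, Eqv E (f x) (g x)) : Eqv E (LOr (l.map f)) (LOr (l.map g)) := by
  induction l with
  | nil => exact e_refl _
  | cons a l ih =>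
      show Eqv E (.or (f a) (LOr (l.map f))) (.or (g a) (LOr (l.map g)))
      exact e_or (h a (by simp)) (ih fun x hx => h x (by simp [hx]))

lemma foldr_and_evalA' (l : List LForm) (v w) :
    (List.foldr LForm.and PropForm.top.toL l).evalA v w = l.all (·.evalA v w) :=
  LAnd_evalA l v w

lemma insertBox_eqv (p : Lint × List Lint) (l : List (Lint × List Lint)) :
    Eqv E (LAnd ((p :: l).map boxRender)) (LAnd ((insertBox p l).map boxRender)) := by
  induction l with
  | nil => exact e_refl _
  | cons q l ih =>
      by_cases h : p.1 = q.1
      · obtain ⟨a, J⟩ := p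
        obtain ⟨b, J'⟩ := q
        simp only at h
        subst h
        simp only [insertBox, if_pos rfl, List.map_cons, LAnd_cons]
        refine e_trans (e_sem fun v w => ?_) (e_and (box_merge a J J') (e_refl _))
        simp [LForm.evalA, foldr_and_evalA', Bool.and_assoc]
      · simp only [insertBox, if_neg h, List.map_cons, LAnd_cons]
        refine e_trans (e_sem fun v w => ?_) (e_and (e_refl (boxRender q)) ih)
        simp [List.map_cons, LAnd_cons, LForm.evalA, foldr_and_evalA', Bool.and_left_comm]

lemma mergeBoxes_eqv (bs : List (Lint × List Lint)) :
    Eqv E (LAnd (bs.map boxRender)) (LAnd ((mergeBoxes bs).map boxRender)) := by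
  induction bs with
  | nil => exact e_refl _
  | cons p bs ih =>
      refine e_trans ?_ (insertBox_eqv p (mergeBoxes bs))
      simp only [List.map_cons, LAnd_cons]
      exact e_and (e_refl _) ih

/-! #### From a skeleton clause to a `Clause` -/

def mkClause (as : List GAtom) (c : List (ℕ × Bool)) : Clause :=
  ⟨PAnd (c.filterMap (propLit as)), mergeBoxes (c.filterMap (boxEntry as)),
    c.filterMap (diaEntry as)⟩

lemma mkClause_wf (as c) : (mkClause as c).wf := nodup_mergeBoxes _

lemma split_all (as : List GAtom) (v w) (c : List (ℕ × Bool)) :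
    (c.all fun p => (litRender as p).evalA v w)
      = (((c.filterMap (propLit as)).all fun π => π.eval v)
        && ((c.filterMap (boxEntry as)).all fun q => (boxRender q).evalA v w)
        && ((c.filterMap (diaEntry as)).all fun q => (negBoxRender q).evalA v w)) := by
  induction c with
  | nil => rfl
  | cons p c ih =>
      simp only [List.all_cons, List.filterMap_cons, ih]
      rcases hg : gAt as p.1 with i | ⟨α, γ⟩ <;> cases hb : p.2
      · simp only [litRender, hb, propLit, boxEntry, diaEntry, hg, if_neg Bool.false_ne_true]
        simp [LForm.evalA, render, PropForm.lit, PropForm.eval, Bool.and_assoc]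
      · simp only [litRender, hb, propLit, boxEntry, diaEntry, hg, if_pos rfl]
        simp [LForm.evalA, render, PropForm.lit, PropForm.eval, Bool.and_assoc]
      · simp only [litRender, hb, propLit, boxEntry, diaEntry, hg, if_neg Bool.false_ne_true,
          eq_self_iff_true, if_true, List.all_cons, List.filterMap_cons, negBoxRender]
        cases h1 : (LForm.neg (render (.inr (α, γ)))).evalA v w <;>
          cases h2 : (c.filterMap (propLit as)).all (fun π => π.eval v) <;>
          cases h3 : (c.filterMap (boxEntry as)).all (fun q => (boxRender q).evalA v w) <;>
          cases h4 : (c.filterMap (diaEntry as)).all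
            (fun q => (negBoxRender q).evalA v w) <;> rfl
      · simp only [litRender, hb, propLit, boxEntry, diaEntry, hg, if_pos rfl,
          eq_self_iff_true, if_true, List.all_cons, List.filterMap_cons]
        rw [show render (.inr (α, γ)) = boxRender (α, dnfL γ.toProp false) from rfl]
        cases h1 : (boxRender (α, dnfL γ.toProp false)).evalA v w <;>
          cases h2 : (c.filterMap (propLit as)).all (fun π => π.eval v) <;>
          cases h3 : (c.filterMap (boxEntry as)).all (fun q => (boxRender q).evalA v w) <;>
          cases h4 : (c.filterMap (diaEntry as)).all
            (fun q => (negBoxRender q).evalA v w) <;> rfl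

lemma clause_eqv (as : List GAtom) (c : List (ℕ × Bool)) :
    Eqv E (LC as c) ((mkClause as c).toLForm) := by
  have h1 : Eqv E (LC as c)
      (.and (LAnd ((c.filterMap (propLit as)).map PropForm.toL))
        (.and (LAnd ((c.filterMap (boxEntry as)).map boxRender))
          (LAnd ((c.filterMap (diaEntry as)).map negBoxRender)))) := by
    refine e_sem fun v w => ?_
    rw [LC, LAnd_evalA, map_all, split_all]
    simp only [LForm.evalA, LAnd_evalA, map_all, toL_evalA, Bool.and_assoc]
  have h2 : Eqv E (LAnd ((c.filterMap (diaEntry as)).map negBoxRender))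
      (LAnd ((c.filterMap (diaEntry as)).map fun q => LForm.dia q.1 q.2.toProp)) := by
    refine e_LAnd_map _ _ _ fun q _ => ?_
    refine e_neg (box_congr q.1 fun v => ?_)
    rw [negD_eval]
    rfl
  have h3 := mergeBoxes_eqv (E := E) (c.filterMap (boxEntry as))
  refine e_trans h1 (e_trans (e_and (e_refl _) (e_and h3 h2)) (e_sem fun v w => ?_))
  simp only [Clause.toLForm, mkClause, LForm.evalA, LAnd_evalA, bigAndL_evalA, map_all,
    toL_evalA, PAnd_eval, boxRender]

/-! #### The full normal form -/

def clauses (φ : LForm) : List Clause :=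
  (dnfAux (abs φ).1 true).map (mkClause (abs φ).2)

lemma clauses_wf (φ : LForm) : ∀ δ ∈ clauses φ, δ.wf := by
  intro δ hδ
  obtain ⟨c, _, rfl⟩ := List.mem_map.1 hδ
  exact mkClause_wf _ _

lemma main_eqv (φ : LForm) :
    Deriv E (φ.iff (bigOrL ((clauses φ).map Clause.toLForm))) := by
  have h1 := abs_eqv (E := E) φ
  have h2 : Eqv E (substL (abs φ).1 (ιof (abs φ).2))
      (LOr ((dnfAux (abs φ).1 true).map (LC (abs φ).2))) := by
    refine e_sem fun v w => ?_
    rw [substL_evalA, LOr_evalA, map_any]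
    rw [show ((dnfAux (abs φ).1 true).any fun c => (LC (abs φ).2 c).evalA v w)
        = ((dnfAux (abs φ).1 true).any
            (clEval fun n => (render (gAt (abs φ).2 n)).evalA v w)) from
      any_congr' _ _ _ fun c _ => LC_evalA _ c v w]
    rw [show ((dnfAux (abs φ).1 true).any
          (clEval fun n => (render (gAt (abs φ).2 n)).evalA v w))
        = dnfEval (fun n => (render (gAt (abs φ).2 n)).evalA v w) (dnfAux (abs φ).1 true)
        from rfl]
    rw [dnfAux_spec]
    simp only [ιof, gAt, beq_true]
  have h3 : Eqv E (LOr ((dnfAux (abs φ).1 true).map (LC (abs φ).2)))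
      (LOr ((dnfAux (abs φ).1 true).map fun c => ((mkClause (abs φ).2 c).toLForm))) :=
    e_LOr_map _ _ _ fun c _ => clause_eqv _ c
  have h4 : Eqv E (LOr ((dnfAux (abs φ).1 true).map fun c => ((mkClause (abs φ).2 c).toLForm)))
      (bigOrL ((clauses φ).map Clause.toLForm)) := by
    refine e_sem fun v w => ?_
    simp [clauses, map_any, List.map_map, Function.comp_def]
  exact e_trans h1 (e_trans h2 (e_trans h3 h4))

end NF
end CausalSim

namespace CausalSim

/-- Normal form lemma: every `L`-formula is provably equivalent in
`AX` (hence in each extension) to a disjunction of conjunctive clauses of the form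
`π ∧ ⋀_{i∈I}([α_i] ⋁_{j∈J_i} β_{i,j}) ∧ ⋀_{k∈K} ⟨α_k⟩ β_k`, with `π ∈ L_prop`,
all `β`'s in `L_int`, and the `α_i` pairwise distinct. -/
theorem normal_form (φ : LForm) :
    ∃ δs : List Clause, (∀ δ ∈ δs, δ.wf) ∧
      AX (φ.iff (bigOrL (δs.map Clause.toLForm))) ∧
      AXdet (φ.iff (bigOrL (δs.map Clause.toLForm))) ∧
      AXhalt (φ.iff (bigOrL (δs.map Clause.toLForm))) ∧
      AXdethalt (φ.iff (bigOrL (δs.map Clause.toLForm))) :=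
  ⟨NF.clauses φ, NF.clauses_wf φ, NF.main_eqv φ, NF.main_eqv φ, NF.main_eqv φ,
    NF.main_eqv φ⟩

end CausalSim
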